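/- Existence of zero-inventory-ordering (consecutive-coverage) optimal solutions: for the facility location formulation with time-independent nonnegative costs, there exists an optimal solution in which, for every item i and supplier j, the set of demand periods k served by a purchase at period t (i.e., {k ≥ t : X^{ij}_{tk} > 0}) is an interval of consecutive periods; equivalently, if X^{ij}_{tk} > 0 and X^{ij}_{tk''} > 0 with k < k'', then the demand d^i_{k'} of every intermediate period k' with t ≤ k < k' < k'' and d^i_{k'} > 0 is served (for item i, supplier j) entirely from periods ≥ the relevant purchase, so that one may choose an optimal extreme solution where X^{ij}_{tk'} = d^i_{k'} for intermediate k'. -/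

import Mathlib

namespace ZIO

variable {NI NJ NT : ℕ}

/-- Feasibility for the facility location formulation. -/
def FeasFL (d : Fin NI → Fin NT → ℝ)
    (X : Fin NI → Fin NJ → Fin NT → Fin NT → ℝ) (y : Fin NJ → Fin NT → ℝ) : Prop :=
  (∀ j t, y j t = 0 ∨ y j t = 1) ∧
  (∀ i j t k, 0 ≤ X i j t k) ∧
  (∀ i j (t k : Fin NT), ¬ t ≤ k → X i j t k = 0) ∧
  (∀ i k, (∑ j, ∑ t ∈ Finset.Iic k, X i j t k) = d i k) ∧
  (∀ i j (t k : Fin NT), t ≤ k → X i j t k ≤ d i k * y j t)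

/-- Objective with time-independent costs: purchase, transaction and holding
(`(k − t)·H_i` per unit purchased at `t` for period `k`). -/
def cost (P : Fin NI → Fin NJ → ℝ) (O : Fin NJ → ℝ) (H : Fin NI → ℝ)
    (X : Fin NI → Fin NJ → Fin NT → Fin NT → ℝ) (y : Fin NJ → Fin NT → ℝ) : ℝ :=
  (∑ i : Fin NI, ∑ j : Fin NJ, ∑ k : Fin NT, ∑ t ∈ Finset.Iic k,
      (P i j + (((k : ℕ) : ℝ) - ((t : ℕ) : ℝ)) * H i) * X i j t k) +
    ∑ j : Fin NJ, ∑ t : Fin NT, O j * y j t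

/-! ### Auxiliary machinery -/

lemma cost_swap (P : Fin NI → Fin NJ → ℝ) (O : Fin NJ → ℝ) (H : Fin NI → ℝ)
    (X : Fin NI → Fin NJ → Fin NT → Fin NT → ℝ) (y : Fin NJ → Fin NT → ℝ) :
    cost P O H X y = (∑ i : Fin NI, ∑ k : Fin NT, ∑ j : Fin NJ, ∑ t ∈ Finset.Iic k,
      (P i j + (((k : ℕ) : ℝ) - ((t : ℕ) : ℝ)) * H i) * X i j t k) +
      ∑ j : Fin NJ, ∑ t : Fin NT, O j * y j t := by
  unfold cost
  congr 1
  exact Finset.sum_congr rfl fun i _ => Finset.sum_comm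

open Classical in
/-- The set of "open" arcs `(j,t)` with `t ≤ k`. -/
noncomputable def Tset (y : Fin NJ → Fin NT → ℝ) (k : Fin NT) : Finset (Fin NJ × Fin NT) :=
  Finset.univ.filter fun p => p.2 ≤ k ∧ y p.1 p.2 = 1

/-- Key function for comparing arcs: cost shifted to be independent of `k`,
with an injective tiebreaker. -/
noncomputable def keyfun (P : Fin NI → Fin NJ → ℝ) (H : Fin NI → ℝ) (i : Fin NI)
    (p : Fin NJ × Fin NT) : ℝ ×ₗ Fin (NJ * NT) :=
  toLex (P i p.1 - ((p.2 : ℕ) : ℝ) * H i, finProdFinEquiv p)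

/-- `p` is the (unique, canonically tie-broken) selected cheapest open arc for `(i,k)`. -/
def IsSel (P : Fin NI → Fin NJ → ℝ) (H : Fin NI → ℝ) (y : Fin NJ → Fin NT → ℝ)
    (i : Fin NI) (k : Fin NT) (p : Fin NJ × Fin NT) : Prop :=
  p ∈ Tset y k ∧ ∀ q ∈ Tset y k, keyfun P H i p ≤ keyfun P H i q

lemma IsSel.unique {P : Fin NI → Fin NJ → ℝ} {H : Fin NI → ℝ} {y : Fin NJ → Fin NT → ℝ}
    {i : Fin NI} {k : Fin NT} {p q : Fin NJ × Fin NT}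
    (hp : IsSel P H y i k p) (hq : IsSel P H y i k q) : p = q := by
  have h1 : keyfun P H i p ≤ keyfun P H i q := hp.2 q hq.1
  have h2 : keyfun P H i q ≤ keyfun P H i p := hq.2 p hp.1
  have h : keyfun P H i p = keyfun P H i q := le_antisymm h1 h2
  have h3 : finProdFinEquiv p = finProdFinEquiv q := congrArg (fun x => (ofLex x).2) h
  exact finProdFinEquiv.injective h3

lemma IsSel.exists_of_nonempty {P : Fin NI → Fin NJ → ℝ} {H : Fin NI → ℝ}
    {y : Fin NJ → Fin NT → ℝ} {i : Fin NI} {k : Fin NT} (h : (Tset y k).Nonempty) :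
    ∃ p, IsSel P H y i k p := by
  obtain ⟨p, hp, hmin⟩ := Finset.exists_min_image (Tset y k) (keyfun P H i) h
  exact ⟨p, hp, hmin⟩

open Classical in
/-- The zero-inventory-ordering rounding of an optimal solution. -/
noncomputable def Xstar (P : Fin NI → Fin NJ → ℝ) (H : Fin NI → ℝ)
    (d : Fin NI → Fin NT → ℝ) (y : Fin NJ → Fin NT → ℝ) :
    Fin NI → Fin NJ → Fin NT → Fin NT → ℝ :=
  fun i j t k => if IsSel P H y i k (j, t) then d i k else 0

set_option maxHeartbeats 4000000 in
theorem exists_consecutive_coverage_optimal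
    (NI NJ NT : ℕ)
    (d : Fin NI → Fin NT → ℝ) (hd : ∀ i k, 0 ≤ d i k)
    (P : Fin NI → Fin NJ → ℝ) (O : Fin NJ → ℝ) (H : Fin NI → ℝ)
    (hP : ∀ i j, 0 ≤ P i j) (hO : ∀ j, 0 ≤ O j) (hH : ∀ i, 0 ≤ H i)
    (hfeas : ∃ (X : Fin NI → Fin NJ → Fin NT → Fin NT → ℝ) (y : Fin NJ → Fin NT → ℝ),
      FeasFL d X y) :
    ∃ (X : Fin NI → Fin NJ → Fin NT → Fin NT → ℝ) (y : Fin NJ → Fin NT → ℝ),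
      FeasFL d X y ∧
      (∀ (X' : Fin NI → Fin NJ → Fin NT → Fin NT → ℝ) (y' : Fin NJ → Fin NT → ℝ),
        FeasFL d X' y' → cost P O H X y ≤ cost P O H X' y') ∧
      (∀ i j (t k₁ k' k₂ : Fin NT), t ≤ k₁ → k₁ < k' → k' < k₂ →
        0 < X i j t k₁ → 0 < X i j t k₂ → 0 < d i k' → X i j t k' = d i k') := by
  classical
  -- the ambient space
  set S : Set ((Fin NI → Fin NJ → Fin NT → Fin NT → ℝ) × (Fin NJ → Fin NT → ℝ)) :=
    {p | FeasFL d p.1 p.2} with hS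
  -- Step 1: the feasible set is compact
  have hSne : S.Nonempty := by
    obtain ⟨X, y, h⟩ := hfeas; exact ⟨(X, y), h⟩
  have hclosed : IsClosed S := by
    have hSeq : S = (⋂ j, ⋂ t, {p : (Fin NI → Fin NJ → Fin NT → Fin NT → ℝ) × (Fin NJ → Fin NT → ℝ) | p.2 j t = 0 ∨ p.2 j t = 1}) ∩
        ((⋂ i, ⋂ j, ⋂ t, ⋂ k, {p : (Fin NI → Fin NJ → Fin NT → Fin NT → ℝ) × (Fin NJ → Fin NT → ℝ) | 0 ≤ p.1 i j t k}) ∩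
        ((⋂ i, ⋂ j, ⋂ t, ⋂ k, {p : (Fin NI → Fin NJ → Fin NT → Fin NT → ℝ) × (Fin NJ → Fin NT → ℝ) | ¬ (t : Fin NT) ≤ k → p.1 i j t k = 0}) ∩
        ((⋂ i, ⋂ k, {p : (Fin NI → Fin NJ → Fin NT → Fin NT → ℝ) × (Fin NJ → Fin NT → ℝ) | (∑ j, ∑ t ∈ Finset.Iic k, p.1 i j t k) = d i k}) ∩
        (⋂ i, ⋂ j, ⋂ t, ⋂ k, {p : (Fin NI → Fin NJ → Fin NT → Fin NT → ℝ) × (Fin NJ → Fin NT → ℝ) | (t : Fin NT) ≤ k → p.1 i j t k ≤ d i k * p.2 j t})))) := by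
      ext p
      simp only [hS, Set.mem_setOf_eq, Set.mem_inter_iff, Set.mem_iInter, FeasFL]
    rw [hSeq]
    refine IsClosed.inter ?_ (IsClosed.inter ?_ (IsClosed.inter ?_ (IsClosed.inter ?_ ?_)))
    · refine isClosed_iInter fun j => isClosed_iInter fun t => ?_
      exact (isClosed_eq (by fun_prop) continuous_const).union
        (isClosed_eq (by fun_prop) continuous_const)
    · refine isClosed_iInter fun i => isClosed_iInter fun j => isClosed_iInter fun t =>
        isClosed_iInter fun k => ?_
      exact isClosed_le continuous_const (by fun_prop)
    · refine isClosed_iInter fun i => isClosed_iInter fun j => isClosed_iInter fun t =>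
        isClosed_iInter fun k => ?_
      by_cases h : (t : Fin NT) ≤ k
      · simp only [h, not_true_eq_false, false_implies]
        exact isClosed_univ
      · simp only [h, not_false_eq_true, true_implies]
        exact isClosed_eq (by fun_prop) continuous_const
    · refine isClosed_iInter fun i => isClosed_iInter fun k => ?_
      exact isClosed_eq (by fun_prop) continuous_const
    · refine isClosed_iInter fun i => isClosed_iInter fun j => isClosed_iInter fun t =>
        isClosed_iInter fun k => ?_
      by_cases h : (t : Fin NT) ≤ k
      · simp only [h, true_implies]
        exact isClosed_le (by fun_prop) (by fun_prop)
      · simp only [h, false_implies]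
        exact isClosed_univ
  have hbdd : Bornology.IsBounded S := by
    set M : ℝ := 1 + ∑ i, ∑ k, |d i k| with hM
    have hM0 : (1 : ℝ) ≤ M := by
      have : (0 : ℝ) ≤ ∑ i, ∑ k, |d i k| :=
        Finset.sum_nonneg fun i _ => Finset.sum_nonneg fun k _ => abs_nonneg _
      rw [hM]; linarith
    have hdM : ∀ i k, |d i k| ≤ M := by
      intro i k
      have h1 : |d i k| ≤ ∑ k', |d i k'| :=
        Finset.single_le_sum (fun k' _ => abs_nonneg (d i k')) (Finset.mem_univ k)
      have h2 : (∑ k', |d i k'|) ≤ ∑ i', ∑ k', |d i' k'| :=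
        Finset.single_le_sum (f := fun i' => ∑ k', |d i' k'|)
          (fun i' _ => Finset.sum_nonneg fun k' _ => abs_nonneg _) (Finset.mem_univ i)
      calc |d i k| ≤ ∑ i', ∑ k', |d i' k'| := le_trans h1 h2
        _ ≤ M := by simp [hM]
    apply Bornology.IsBounded.subset (Metric.isBounded_closedBall (x := (0 : (Fin NI → Fin NJ → Fin NT → Fin NT → ℝ) × (Fin NJ → Fin NT → ℝ))) (r := M))
    intro p hp
    obtain ⟨hy01, hXnn, hXzero, hXdem, hXub⟩ := (hp : FeasFL d p.1 p.2)
    rw [Metric.mem_closedBall, dist_zero_right]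
    rw [Prod.norm_def]
    have hM0' : (0 : ℝ) ≤ M := le_trans zero_le_one hM0
    apply max_le
    · rw [pi_norm_le_iff_of_nonneg hM0']
      intro i
      rw [pi_norm_le_iff_of_nonneg hM0']
      intro j
      rw [pi_norm_le_iff_of_nonneg hM0']
      intro t
      rw [pi_norm_le_iff_of_nonneg hM0']
      intro k
      rw [Real.norm_eq_abs, abs_le]
      constructor
      · linarith [hXnn i j t k]
      · by_cases ht : t ≤ k
        · have h1 := hXub i j t k ht
          have h2 : d i k * p.2 j t ≤ |d i k| := by
            rcases hy01 j t with h0 | h1'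
            · rw [h0, mul_zero]; exact abs_nonneg _
            · rw [h1', mul_one]; exact le_abs_self _
          linarith [hdM i k]
        · rw [hXzero i j t k ht]; exact hM0'
    · rw [pi_norm_le_iff_of_nonneg hM0']
      intro j
      rw [pi_norm_le_iff_of_nonneg hM0']
      intro t
      rw [Real.norm_eq_abs, abs_le]
      rcases hy01 j t with h0 | h0 <;> rw [h0] <;> constructor <;> linarith
  have hcomp : IsCompact S := Metric.isCompact_of_isClosed_isBounded hclosed hbdd
  have hcont : Continuous (fun p : (Fin NI → Fin NJ → Fin NT → Fin NT → ℝ) × (Fin NJ → Fin NT → ℝ) => cost P O H p.1 p.2) := by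
    unfold cost
    fun_prop
  obtain ⟨⟨X₀, y⟩, hX₀S, hmin⟩ := hcomp.exists_isMinOn hSne hcont.continuousOn
  have hF : FeasFL d X₀ y := hX₀S
  obtain ⟨hy01, hXnn, hXzero, hXdem, hXub⟩ := hF
  -- positive X₀ implies the arc is open
  have hpos_open : ∀ i j (t k : Fin NT), 0 < X₀ i j t k → (j, t) ∈ Tset y k := by
    intro i j t k hpos
    have ht : t ≤ k := by
      by_contra h; rw [hXzero i j t k h] at hpos; exact lt_irrefl 0 hpos
    have hy : y j t = 1 := by
      rcases hy01 j t with h0 | h1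
      · exfalso
        have := hXub i j t k ht
        rw [h0, mul_zero] at this
        exact absurd (le_antisymm this (hXnn i j t k)) (ne_of_gt hpos)
      · exact h1
    simp [Tset, ht, hy]
  -- if demand is positive then Tset is nonempty
  have hdem_ne : ∀ i k, 0 < d i k → (Tset y k).Nonempty := by
    intro i k hpos
    by_contra hne
    have : ∀ j, ∀ t ∈ Finset.Iic k, X₀ i j t k = 0 := by
      intro j t ht
      by_contra hx
      have hx' : 0 < X₀ i j t k := lt_of_le_of_ne (hXnn i j t k) (Ne.symm hx)
      exact hne ⟨(j, t), hpos_open i j t k hx'⟩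
    have : (∑ j, ∑ t ∈ Finset.Iic k, X₀ i j t k) = 0 := by
      apply Finset.sum_eq_zero; intro j _
      exact Finset.sum_eq_zero (this j)
    rw [hXdem i k] at this
    exact absurd this (ne_of_gt hpos)
  -- the candidate solution
  set X := Xstar P H d y with hXdef
  refine ⟨X, y, ?_, ?_, ?_⟩
  · -- feasibility
    refine ⟨hy01, ?_, ?_, ?_, ?_⟩
    · intro i j t k
      rw [hXdef]; unfold Xstar
      split
      · exact hd i k
      · exact le_rfl
    · intro i j t k ht
      rw [hXdef]; unfold Xstar
      rw [if_neg]
      intro h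
      have := h.1
      simp [Tset] at this
      exact ht this.1
    · intro i k
      by_cases hne : (Tset y k).Nonempty
      · obtain ⟨p₀, hp₀⟩ := IsSel.exists_of_nonempty (P := P) (H := H) (i := i) hne
        have hiff : ∀ p : Fin NJ × Fin NT, IsSel P H y i k p ↔ p = p₀ :=
          fun p => ⟨fun h => h.unique hp₀, fun h => h ▸ hp₀⟩
        have hcalc : (∑ j, ∑ t ∈ Finset.Iic k, X i j t k)
            = ∑ p ∈ Finset.univ ×ˢ Finset.Iic k, X i p.1 p.2 k :=
          (Finset.sum_product (s := Finset.univ) (t := Finset.Iic k)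
            (f := fun p => X i p.1 p.2 k)).symm
        rw [hcalc]
        have : ∀ p ∈ Finset.univ ×ˢ Finset.Iic k,
            X i p.1 p.2 k = if p = p₀ then d i k else 0 := by
          intro p _
          rw [hXdef]; unfold Xstar
          congr 1
          simp only [eq_iff_iff]
          constructor
          · intro h; exact (hiff (p.1, p.2)).mp h
          · intro h; exact (hiff (p.1, p.2)).mpr h
        rw [Finset.sum_congr rfl this, Finset.sum_ite_eq' _ p₀ (fun _ => d i k)]
        have hmem : p₀ ∈ Finset.univ ×ˢ Finset.Iic k := by
          have := hp₀.1
          simp [Tset] at this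
          simp [Finset.mem_product, this.1]
        simp [hmem]
      · have hd0 : d i k = 0 := by
          by_contra h
          exact hne (hdem_ne i k (lt_of_le_of_ne (hd i k) (Ne.symm h)))
        have : ∀ j, ∀ t ∈ Finset.Iic k, X i j t k = 0 := by
          intro j t _
          rw [hXdef]; unfold Xstar
          by_cases h : IsSel P H y i k (j, t)
          · rw [if_pos h]; exact hd0
          · rw [if_neg h]
        rw [Finset.sum_eq_zero fun j _ => Finset.sum_eq_zero (this j), hd0]
    · intro i j t k ht
      rw [hXdef]; unfold Xstar
      by_cases h : IsSel P H y i k (j, t)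
      · have hm := h.1
        simp [Tset] at hm
        rw [if_pos h, hm.2, mul_one]
      · rw [if_neg h]
        rcases hy01 j t with h0 | h1
        · rw [h0, mul_zero]
        · rw [h1, mul_one]; exact hd i k
  · -- optimality
    intro X' y' hF'
    have hmem' : (X', y') ∈ S := hF'
    have hle2 := isMinOn_iff.mp hmin (X', y') hmem'
    simp only at hle2
    refine le_trans ?_ hle2
    rw [cost_swap P O H X y, cost_swap P O H X₀ y]
    apply add_le_add_left
    have key : ∀ (i : Fin NI) (k : Fin NT),
        (∑ j, ∑ t ∈ Finset.Iic k,
          (P i j + (((k : ℕ) : ℝ) - ((t : ℕ) : ℝ)) * H i) * X i j t k)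
        ≤ ∑ j, ∑ t ∈ Finset.Iic k,
          (P i j + (((k : ℕ) : ℝ) - ((t : ℕ) : ℝ)) * H i) * X₀ i j t k := by
      intro i k
      set c : Fin NJ × Fin NT → ℝ :=
        fun p => P i p.1 + (((k : ℕ) : ℝ) - ((p.2 : ℕ) : ℝ)) * H i with hc
      by_cases hne : (Tset y k).Nonempty
      · obtain ⟨p₀, hp₀⟩ := IsSel.exists_of_nonempty (P := P) (H := H) (i := i) hne
        have hiff : ∀ p : Fin NJ × Fin NT, IsSel P H y i k p ↔ p = p₀ :=
          fun p => ⟨fun h => h.unique hp₀, fun h => h ▸ hp₀⟩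
        -- LHS equals c p₀ * d i k
        have hL : (∑ j, ∑ t ∈ Finset.Iic k, c (j, t) * X i j t k) = c p₀ * d i k := by
          have h1 : (∑ j, ∑ t ∈ Finset.Iic k, c (j, t) * X i j t k)
              = ∑ p ∈ Finset.univ ×ˢ Finset.Iic k, c p * X i p.1 p.2 k :=
            (Finset.sum_product (s := Finset.univ) (t := Finset.Iic k)
              (f := fun p => c p * X i p.1 p.2 k)).symm
          rw [h1]
          have h2 : ∀ p ∈ Finset.univ ×ˢ Finset.Iic k,
              c p * X i p.1 p.2 k = if p = p₀ then c p * d i k else 0 := by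
            intro p _
            rw [hXdef]; unfold Xstar
            by_cases h : p = p₀
            · rw [if_pos h, if_pos ((hiff (p.1, p.2)).mpr h)]
            · rw [if_neg h, if_neg (fun hc' => h ((hiff (p.1, p.2)).mp hc')), mul_zero]
          rw [Finset.sum_congr rfl h2, Finset.sum_ite_eq' _ p₀ (fun p => c p * d i k)]
          have hmem : p₀ ∈ Finset.univ ×ˢ Finset.Iic k := by
            have := hp₀.1
            simp [Tset] at this
            simp [Finset.mem_product, this.1]
          rw [if_pos hmem]
        have hR : c p₀ * d i k ≤ ∑ j, ∑ t ∈ Finset.Iic k, c (j, t) * X₀ i j t k := by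
          rw [← hXdem i k, Finset.mul_sum]
          apply Finset.sum_le_sum
          intro j _
          rw [Finset.mul_sum]
          apply Finset.sum_le_sum
          intro t _
          rcases eq_or_lt_of_le (hXnn i j t k) with h0 | hpos
          · rw [← h0, mul_zero, mul_zero]
          · have hT := hpos_open i j t k hpos
            have hkey := hp₀.2 (j, t) hT
            unfold keyfun at hkey
            have hg : P i p₀.1 - ((p₀.2 : ℕ) : ℝ) * H i ≤ P i j - ((t : ℕ) : ℝ) * H i := by
              rcases Prod.Lex.le_iff.mp hkey with h | h
              · exact le_of_lt h
              · exact le_of_eq h.1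
            have hcle : c p₀ ≤ c (j, t) := by
              rw [hc]
              simp only
              linarith
            exact mul_le_mul_of_nonneg_right hcle (le_of_lt hpos)
        calc (∑ j, ∑ t ∈ Finset.Iic k, c (j, t) * X i j t k) = c p₀ * d i k := hL
          _ ≤ _ := hR
      · have hX0 : ∀ j t, X i j t k = 0 := by
          intro j t
          rw [hXdef]; unfold Xstar
          rw [if_neg]
          intro h
          exact hne ⟨(j, t), h.1⟩
        have hL0 : (∑ j, ∑ t ∈ Finset.Iic k, c (j, t) * X i j t k) = 0 := by
          apply Finset.sum_eq_zero; intro j _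
          apply Finset.sum_eq_zero; intro t _
          rw [hX0 j t, mul_zero]
        rw [hL0]
        apply Finset.sum_nonneg; intro j _
        apply Finset.sum_nonneg; intro t htmem
        have ht : t ≤ k := Finset.mem_Iic.mp htmem
        have hcnn : 0 ≤ c (j, t) := by
          apply add_nonneg (hP i j)
          apply mul_nonneg _ (hH i)
          rw [sub_nonneg]
          exact_mod_cast (Fin.le_def.mp ht)
        exact mul_nonneg hcnn (hXnn i j t k)
    exact Finset.sum_le_sum fun i _ => Finset.sum_le_sum fun k _ => key i k
  · -- zero-inventory-ordering property
    intro i j t k₁ k' k₂ ht hk1 hk2 hp1 hp2 hdpos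
    have hs1 : IsSel P H y i k₁ (j, t) := by
      by_contra h; rw [hXdef] at hp1; simp [Xstar, h] at hp1
    have hs2 : IsSel P H y i k₂ (j, t) := by
      by_contra h; rw [hXdef] at hp2; simp [Xstar, h] at hp2
    have hsel' : IsSel P H y i k' (j, t) := by
      constructor
      · have htk1 : t ≤ k₁ := by
          have := hs1.1
          simp [Tset] at this
          exact this.1
        have hy1 : y j t = 1 := by
          have := hs1.1
          simp [Tset] at this
          exact this.2
        simp [Tset, le_trans htk1 (le_of_lt hk1), hy1]
      · intro q hq
        apply hs2.2
        simp [Tset] at hq ⊢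
        exact ⟨le_trans hq.1 (le_of_lt hk2), hq.2⟩
    rw [hXdef]
    simp [Xstar, hsel']

end ZIO
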